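/- (Integration by parts for the scale derivative, convergent case.) Let a < b, δ > 0, α, β ∈ (0,1) with α + β > 1, and let f, g : ℝ → ℝ be continuous on [a−δ, b+δ], with f Hölder of exponent α and g Hölder of exponent β on [a−δ, b+δ]. Suppose there are functions F, G : [a,b] → ℂ and a constant M > 0 such that for every t ∈ [a,b]: □_h f(t) → F(t) and □_h g(t) → G(t) as h → 0⁺, and |□_h f(t)| ≤ M and |□_h g(t)| ≤ M for all h ∈ (0, δ). Then ∫_a^b F(t)·g(t) dt = f(b)g(b) − f(a)g(a) − ∫_a^b f(t)·G(t) dt. -/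

import Mathlib

open Filter MeasureTheory intervalIntegral

/-- Delta derivative: `Δ_h[f](t) = (f(t+h) − f(t))/h`. -/
noncomputable def deltaD (f : ℝ → ℝ) (h t : ℝ) : ℝ := (f (t + h) - f t) / h

/-- Nabla derivative: `∇_h[f](t) = (f(t) − f(t−h))/h`. -/
noncomputable def nablaD (f : ℝ → ℝ) (h t : ℝ) : ℝ := (f t - f (t - h)) / h

/-- The `h`-scale derivative:
`□_h f(t) = (1/2)[(Δ_h[f](t) + ∇_h[f](t)) + i(Δ_h[f](t) − ∇_h[f](t))]`. -/
noncomputable def scaleD (f : ℝ → ℝ) (h t : ℝ) : ℂ :=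
  (1 / 2 : ℂ) * (((deltaD f h t + nablaD f h t : ℝ) : ℂ)
    + Complex.I * ((deltaD f h t - nablaD f h t : ℝ) : ℂ))


lemma aux_slope {P : ℝ → ℝ} {s : Set ℝ} (hs : IsOpen s) (hP : ContinuousOn P s)
    {c : ℝ} (hc : c ∈ s) :
    Tendsto (fun h : ℝ => (∫ t in c..(c+h), P t) / h) (nhdsWithin 0 {0}ᶜ) (nhds (P c)) := by
  have hd : HasDerivAt (fun u => ∫ x in c..u, P x) (P c) c :=
    intervalIntegral.integral_hasDerivAt_right (by simp)
      (hP.stronglyMeasurableAtFilter hs c hc) ((hP.continuousAt (hs.mem_nhds hc)))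
  have hslope := hasDerivAt_iff_tendsto_slope.mp hd
  have hmap : Tendsto (fun h : ℝ => c + h) (nhdsWithin 0 {0}ᶜ) (nhdsWithin c {c}ᶜ) := by
    apply tendsto_nhdsWithin_of_tendsto_nhds_of_eventually_within
    · simpa using ((continuous_add_left c).tendsto 0).mono_left nhdsWithin_le_nhds
    · filter_upwards [self_mem_nhdsWithin] with h (hh : h ≠ 0)
      simpa using hh
  have := hslope.comp hmap
  refine this.congr fun h => ?_
  simp [slope, Function.comp, div_eq_inv_mul]

lemma aux_right {P : ℝ → ℝ} {s : Set ℝ} (hs : IsOpen s) (hP : ContinuousOn P s)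
    {c : ℝ} (hc : c ∈ s) :
    Tendsto (fun h : ℝ => (∫ t in c..(c+h), P t) / h) (nhdsWithin 0 (Set.Ioi 0)) (nhds (P c)) :=
  (aux_slope hs hP hc).mono_left (nhdsWithin_mono _ (fun _ hx => ne_of_gt hx))

lemma aux_left {P : ℝ → ℝ} {s : Set ℝ} (hs : IsOpen s) (hP : ContinuousOn P s)
    {c : ℝ} (hc : c ∈ s) :
    Tendsto (fun h : ℝ => (∫ t in (c-h)..c, P t) / h) (nhdsWithin 0 (Set.Ioi 0)) (nhds (P c)) := by
  have hneg : Tendsto (fun h : ℝ => -h) (nhdsWithin 0 (Set.Ioi 0)) (nhdsWithin 0 {0}ᶜ) := by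
    apply tendsto_nhdsWithin_of_tendsto_nhds_of_eventually_within
    · simpa using (continuous_neg.tendsto (0:ℝ)).mono_left nhdsWithin_le_nhds
    · filter_upwards [self_mem_nhdsWithin] with h (hh : h ∈ Set.Ioi 0)
      simpa using ne_of_gt hh
  have := (aux_slope hs hP hc).comp hneg
  refine this.congr fun h => ?_
  show (∫ t in c..(c + -h), P t) / (-h) = _
  rw [show c + -h = c - h by ring, intervalIntegral.integral_symm, neg_div, div_neg, neg_neg]


/-- Integration by parts for the scale derivative (convergent case): with `f` `α`-Hölder,
`g` `β`-Hölder (`α+β>1`) and continuous on `[a−δ, b+δ]`, if `□_h f(t) → F(t)` and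
`□_h g(t) → G(t)` as `h → 0⁺` for every `t ∈ [a,b]`, with the uniform bound `M`, then
`∫_a^b F·g = f(b)g(b) − f(a)g(a) − ∫_a^b f·G`. -/
theorem stmt_8 (a b δ α β : ℝ) (hab : a < b) (hδ : 0 < δ)
    (hα : α ∈ Set.Ioo (0 : ℝ) 1) (hβ : β ∈ Set.Ioo (0 : ℝ) 1) (hαβ : 1 < α + β)
    (f g : ℝ → ℝ)
    (hfc : ContinuousOn f (Set.Icc (a - δ) (b + δ)))
    (hgc : ContinuousOn g (Set.Icc (a - δ) (b + δ)))
    (hf : ∃ C > (0 : ℝ), ∀ s ∈ Set.Icc (a - δ) (b + δ), ∀ u ∈ Set.Icc (a - δ) (b + δ),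
      |f u - f s| ≤ C * |u - s| ^ α)
    (hg : ∃ C > (0 : ℝ), ∀ s ∈ Set.Icc (a - δ) (b + δ), ∀ u ∈ Set.Icc (a - δ) (b + δ),
      |g u - g s| ≤ C * |u - s| ^ β)
    (F G : ℝ → ℂ) (M : ℝ) (hM : 0 < M)
    (hF : ∀ t ∈ Set.Icc a b,
      Tendsto (fun h : ℝ => scaleD f h t) (nhdsWithin 0 (Set.Ioi 0)) (nhds (F t)))
    (hG : ∀ t ∈ Set.Icc a b,
      Tendsto (fun h : ℝ => scaleD g h t) (nhdsWithin 0 (Set.Ioi 0)) (nhds (G t)))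
    (hFb : ∀ t ∈ Set.Icc a b, ∀ h ∈ Set.Ioo (0 : ℝ) δ, ‖scaleD f h t‖ ≤ M)
    (hGb : ∀ t ∈ Set.Icc a b, ∀ h ∈ Set.Ioo (0 : ℝ) δ, ‖scaleD g h t‖ ≤ M) :
    ∫ t in a..b, F t * (g t : ℂ)
      = (f b : ℂ) * (g b : ℂ) - (f a : ℂ) * (g a : ℂ) - ∫ t in a..b, (f t : ℂ) * G t := by
  obtain ⟨hα0, hα1⟩ := hα
  obtain ⟨hβ0, hβ1⟩ := hβ
  obtain ⟨Cf, hCf, hfH⟩ := hf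
  obtain ⟨Cg, hCg, hgH⟩ := hg
  have hab' : a ≤ b := le_of_lt hab
  set s : Set ℝ := Set.Icc (a - δ) (b + δ) with hs_def
  set l : Filter ℝ := nhdsWithin 0 (Set.Ioi 0) with hl_def
  have hIoo : Set.Ioo (0:ℝ) δ ∈ l := Ioo_mem_nhdsGT_of_mem ⟨le_refl 0, hδ⟩
  have hsub : Set.Icc a b ⊆ s := fun t ht => ⟨by linarith [ht.1], by linarith [ht.2]⟩
  -- membership facts
  have hmemp : ∀ t ∈ Set.Icc a b, ∀ h ∈ Set.Ioo (0:ℝ) δ, t + h ∈ s := by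
    rintro t ⟨ht1, ht2⟩ h ⟨hh1, hh2⟩; exact ⟨by linarith, by linarith⟩
  have hmemm : ∀ t ∈ Set.Icc a b, ∀ h ∈ Set.Ioo (0:ℝ) δ, t - h ∈ s := by
    rintro t ⟨ht1, ht2⟩ h ⟨hh1, hh2⟩; exact ⟨by linarith, by linarith⟩
  -- continuity on [a,b]
  have hcf : ContinuousOn f (Set.Icc a b) := hfc.mono hsub
  have hcg : ContinuousOn g (Set.Icc a b) := hgc.mono hsub
  have hcont : ∀ (φ : ℝ → ℝ), ContinuousOn φ s → ∀ h ∈ Set.Ioo (0:ℝ) δ,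
      ContinuousOn (deltaD φ h) (Set.Icc a b) ∧ ContinuousOn (nablaD φ h) (Set.Icc a b) := by
    intro φ hφ h hh
    have h1 : ContinuousOn (fun t => φ (t + h)) (Set.Icc a b) :=
      hφ.comp ((continuous_id.add continuous_const).continuousOn) (fun t ht => hmemp t ht h hh)
    have h2 : ContinuousOn (fun t => φ (t - h)) (Set.Icc a b) :=
      hφ.comp ((continuous_id.sub continuous_const).continuousOn) (fun t ht => hmemm t ht h hh)
    exact ⟨(h1.sub (hφ.mono hsub)).div_const h, ((hφ.mono hsub).sub h2).div_const h⟩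
  -- Hölder bounds on delta/nabla derivatives
  have hbd : ∀ h ∈ Set.Ioo (0:ℝ) δ, ∀ t ∈ Set.Icc a b,
      |deltaD f h t| ≤ Cf * h ^ (α - 1) ∧ |nablaD f h t| ≤ Cf * h ^ (α - 1) ∧
      |deltaD g h t| ≤ Cg * h ^ (β - 1) ∧ |nablaD g h t| ≤ Cg * h ^ (β - 1) := by
    intro h hh t ht
    have h0 : (0:ℝ) < h := hh.1
    have habs : |h| = h := abs_of_pos h0
    have key : ∀ (φ : ℝ → ℝ) (C γ : ℝ), 0 < C →
        (∀ s' ∈ s, ∀ u ∈ s, |φ u - φ s'| ≤ C * |u - s'| ^ γ) →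
        |deltaD φ h t| ≤ C * h ^ (γ - 1) ∧ |nablaD φ h t| ≤ C * h ^ (γ - 1) := by
      intro φ C γ hC hH
      have e1 : |φ (t + h) - φ t| ≤ C * h ^ γ := by
        have := hH t (hsub ht) (t + h) (hmemp t ht h hh)
        simpa [habs] using this
      have e2 : |φ t - φ (t - h)| ≤ C * h ^ γ := by
        have := hH (t - h) (hmemm t ht h hh) t (hsub ht)
        simpa [habs] using this
      have hrw : C * h ^ γ / h = C * h ^ (γ - 1) := by
        rw [Real.rpow_sub h0, Real.rpow_one, mul_div_assoc]
      constructor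
      · rw [deltaD, abs_div, habs, ← hrw]
        gcongr
      · rw [nablaD, abs_div, habs, ← hrw]
        gcongr
    exact ⟨(key f Cf α hCf hfH).1, (key f Cf α hCf hfH).2,
      (key g Cg β hCg hgH).1, (key g Cg β hCg hgH).2⟩
  -- scaleD continuity
  have hscont : ∀ (φ : ℝ → ℝ), ContinuousOn φ s → ∀ h ∈ Set.Ioo (0:ℝ) δ,
      ContinuousOn (fun t => scaleD φ h t) (Set.Icc a b) := by
    intro φ hφ h hh
    obtain ⟨hD1, hN1⟩ := hcont φ hφ h hh
    unfold scaleD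
    apply ContinuousOn.mul continuousOn_const
    exact (Complex.continuous_ofReal.comp_continuousOn (hD1.add hN1)).add
      (ContinuousOn.mul continuousOn_const
        (Complex.continuous_ofReal.comp_continuousOn (hD1.sub hN1)))
  have hIoc_sub : Set.Ioc a b ⊆ Set.Icc a b := Set.Ioc_subset_Icc_self
  have hrestr : Measure.restrict volume (Set.Ioc a b) ≤ Measure.restrict volume (Set.Icc a b) :=
    Measure.restrict_mono hIoc_sub le_rfl
  have hΦ : Tendsto (fun h : ℝ => ∫ t in a..b, scaleD f h t * (g t : ℂ)) l
      (nhds (∫ t in a..b, F t * (g t : ℂ))) := by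
    simp only [intervalIntegral.integral_of_le hab']
    apply MeasureTheory.tendsto_integral_filter_of_dominated_convergence (fun t => M * |g t|)
    · filter_upwards [hIoo] with h hh
      exact (((hscont f hfc h hh).mul
        (Complex.continuous_ofReal.comp_continuousOn hcg)).aestronglyMeasurable
          measurableSet_Icc).mono_measure hrestr
    · filter_upwards [hIoo] with h hh
      rw [ae_restrict_iff' measurableSet_Ioc]
      refine Eventually.of_forall fun t ht => ?_
      have hb := hFb t (hIoc_sub ht) h hh
      calc ‖scaleD f h t * (g t : ℂ)‖ = ‖scaleD f h t‖ * |g t| := by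
            simp
        _ ≤ M * |g t| := mul_le_mul_of_nonneg_right hb (abs_nonneg _)
    · exact ((continuousOn_const.mul hcg.abs).integrableOn_Icc).mono_set hIoc_sub
    · rw [ae_restrict_iff' measurableSet_Ioc]
      refine Eventually.of_forall fun t ht => ?_
      exact (hF t (hIoc_sub ht)).mul_const _
  have hΨ : Tendsto (fun h : ℝ => ∫ t in a..b, (f t : ℂ) * scaleD g h t) l
      (nhds (∫ t in a..b, (f t : ℂ) * G t)) := by
    simp only [intervalIntegral.integral_of_le hab']
    apply MeasureTheory.tendsto_integral_filter_of_dominated_convergence (fun t => |f t| * M)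
    · filter_upwards [hIoo] with h hh
      exact (((Complex.continuous_ofReal.comp_continuousOn hcf).mul
        (hscont g hgc h hh)).aestronglyMeasurable measurableSet_Icc).mono_measure hrestr
    · filter_upwards [hIoo] with h hh
      rw [ae_restrict_iff' measurableSet_Ioc]
      refine Eventually.of_forall fun t ht => ?_
      have hb := hGb t (hIoc_sub ht) h hh
      calc ‖(f t : ℂ) * scaleD g h t‖ = |f t| * ‖scaleD g h t‖ := by
            simp
        _ ≤ |f t| * M := mul_le_mul_of_nonneg_left hb (abs_nonneg _)
    · exact ((hcf.abs.mul continuousOn_const).integrableOn_Icc).mono_set hIoc_sub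
    · rw [ae_restrict_iff' measurableSet_Ioc]
      refine Eventually.of_forall fun t ht => ?_
      exact (hG t (hIoc_sub ht)).const_mul _
  -- integrability helper
  have hii : ∀ {E : Type} [NormedAddCommGroup E] (u : ℝ → E), ContinuousOn u (Set.Icc a b) →
      IntervalIntegrable u volume a b := by
    intro E _ u hu
    exact ContinuousOn.intervalIntegrable (by rw [Set.uIcc_of_le hab']; exact hu)
  have hPc : ContinuousOn (fun t => f t * g t) s := hfc.mul hgc
  have hPint : ∀ u ∈ s, ∀ v ∈ s, IntervalIntegrable (fun t => f t * g t) volume u v :=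
    fun u hu v hv => (hPc.mono (Set.uIcc_subset_Icc hu hv)).intervalIntegrable
  have hshift : ∀ (φ : ℝ → ℝ), ContinuousOn φ s → ∀ h ∈ Set.Ioo (0:ℝ) δ,
      ContinuousOn (fun t => φ (t + h)) (Set.Icc a b) ∧
      ContinuousOn (fun t => φ (t - h)) (Set.Icc a b) := by
    intro φ hφ h hh
    exact ⟨hφ.comp ((continuous_id.add continuous_const).continuousOn)
        (fun t ht => hmemp t ht h hh),
      hφ.comp ((continuous_id.sub continuous_const).continuousOn)
        (fun t ht => hmemm t ht h hh)⟩
  -- product bounds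
  have hprod : ∀ h ∈ Set.Ioo (0:ℝ) δ, ∀ t ∈ Set.Icc a b,
      |deltaD f h t * deltaD g h t| ≤ (Cf*Cg) * h^(α+β-2) ∧
      |nablaD f h t * nablaD g h t| ≤ (Cf*Cg) * h^(α+β-2) := by
    intro h hh t ht
    obtain ⟨b1, b2, b3, b4⟩ := hbd h hh t ht
    have h0 := hh.1
    have hpow : (Cf * h^(α-1)) * (Cg * h^(β-1)) = (Cf*Cg) * h^(α+β-2) := by
      rw [show α+β-2 = (α-1)+(β-1) by ring, Real.rpow_add h0]; ring
    have hnn : (0:ℝ) ≤ Cf * h^(α-1) := mul_nonneg hCf.le (Real.rpow_nonneg h0.le _)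
    constructor
    · rw [abs_mul, ← hpow]
      exact mul_le_mul b1 b3 (abs_nonneg _) hnn
    · rw [abs_mul, ← hpow]
      exact mul_le_mul b2 b4 (abs_nonneg _) hnn
  -- remainder limit
  have hRlim : ∀ (D : ℝ → ℝ → ℝ),
      (∀ h ∈ Set.Ioo (0:ℝ) δ, ∀ t ∈ Set.Icc a b, |D h t| ≤ (Cf*Cg) * h^(α+β-2)) →
      Tendsto (fun h : ℝ => h * ∫ t in a..b, D h t) l (nhds 0) := by
    intro D hD
    have hbnd : Tendsto (fun h : ℝ => (Cf*Cg) * h^(α+β-1) * |b - a|) l (nhds 0) := by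
      have h1 : Tendsto (fun h : ℝ => (Cf*Cg) * h^(α+β-1) * |b-a|) (nhds 0)
          (nhds ((Cf*Cg) * (0:ℝ)^(α+β-1) * |b-a|)) :=
        (((Real.continuousAt_rpow_const 0 (α+β-1) (Or.inr (by linarith))).tendsto.const_mul
          _).mul_const _)
      rw [Real.zero_rpow (ne_of_gt (show (0:ℝ) < α+β-1 by linarith)), mul_zero, zero_mul] at h1
      exact h1.mono_left nhdsWithin_le_nhds
    apply squeeze_zero_norm' ?_ hbnd
    filter_upwards [hIoo] with h hh
    have h0 := hh.1
    have hint : ‖∫ t in a..b, D h t‖ ≤ (Cf*Cg) * h^(α+β-2) * |b-a| := by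
      apply intervalIntegral.norm_integral_le_of_norm_le_const
      intro t ht
      have ht' : t ∈ Set.Icc a b := hIoc_sub (by rwa [Set.uIoc_of_le hab'] at ht)
      simpa [Real.norm_eq_abs] using hD h hh t ht'
    calc ‖h * ∫ t in a..b, D h t‖ = h * ‖∫ t in a..b, D h t‖ := by
          rw [norm_mul, Real.norm_eq_abs, abs_of_pos h0]
      _ ≤ h * ((Cf*Cg) * h^(α+β-2) * |b-a|) := mul_le_mul_of_nonneg_left hint h0.le
      _ = (Cf*Cg) * h^(α+β-1) * |b-a| := by
          rw [show α+β-1 = 1+(α+β-2) by ring, Real.rpow_add h0, Real.rpow_one]; ring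
  have hmem_a : a ∈ s := hsub ⟨le_refl a, hab'⟩
  have hmem_b : b ∈ s := hsub ⟨hab', le_refl b⟩
  have hPo : ContinuousOn (fun t => f t * g t) (Set.Ioo (a-δ) (b+δ)) :=
    hPc.mono Set.Ioo_subset_Icc_self
  have hbo : b ∈ Set.Ioo (a-δ) (b+δ) := ⟨by linarith, by linarith⟩
  have hao : a ∈ Set.Ioo (a-δ) (b+δ) := ⟨by linarith, by linarith⟩
  -- limit of A
  have hA : Tendsto (fun h : ℝ => ∫ t in a..b, (deltaD f h t * g t + f t * deltaD g h t)) l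
      (nhds (f b * g b - f a * g a)) := by
    have hE : Tendsto (fun h : ℝ => (∫ t in b..(b+h), f t * g t)/h
        - (∫ t in a..(a+h), f t * g t)/h) l (nhds (f b * g b - f a * g a)) :=
      (aux_right isOpen_Ioo hPo hbo).sub (aux_right isOpen_Ioo hPo hao)
    have hR := hRlim (fun h t => deltaD f h t * deltaD g h t) (fun h hh t ht => (hprod h hh t ht).1)
    have heqA : ∀ᶠ h in l, ((∫ t in b..(b+h), f t * g t)/h - (∫ t in a..(a+h), f t * g t)/h)
        - h * (∫ t in a..b, deltaD f h t * deltaD g h t)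
        = ∫ t in a..b, (deltaD f h t * g t + f t * deltaD g h t) := by
      filter_upwards [hIoo] with h hh
      have h0 := hh.1
      obtain ⟨hcDf, hcNf⟩ := hcont f hfc h hh
      obtain ⟨hcDg, hcNg⟩ := hcont g hgc h hh
      have i1 : IntervalIntegrable (fun t => deltaD f h t * g t + f t * deltaD g h t) volume a b :=
        hii _ ((hcDf.mul hcg).add (hcf.mul hcDg))
      have i2 : IntervalIntegrable (fun t => deltaD f h t * deltaD g h t) volume a b :=
        hii _ (hcDf.mul hcDg)
      have i3 : IntervalIntegrable (fun t => f (t+h) * g (t+h)) volume a b :=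
        hii _ ((hshift f hfc h hh).1.mul ((hshift g hgc h hh).1))
      have i4 : IntervalIntegrable (fun t => f t * g t) volume a b := hii _ (hcf.mul hcg)
      have hfun : (fun t => (deltaD f h t * g t + f t * deltaD g h t)
          + h * (deltaD f h t * deltaD g h t)) = fun t => (f (t+h) * g (t+h) - f t * g t)/h := by
        funext t; simp only [deltaD]; field_simp; ring
      have key : (∫ t in a..b, (deltaD f h t * g t + f t * deltaD g h t))
          + h * (∫ t in a..b, deltaD f h t * deltaD g h t)
          = (∫ t in b..(b+h), f t * g t)/h - (∫ t in a..(a+h), f t * g t)/h := by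
        rw [← intervalIntegral.integral_const_mul, ← intervalIntegral.integral_add i1
          (i2.const_mul h), hfun]
        have hsplit : (∫ t in a..b, (f (t+h) * g (t+h) - f t * g t)/h)
            = ((∫ t in a..b, f (t+h) * g (t+h)) - ∫ t in a..b, f t * g t)/h := by
          rw [intervalIntegral.integral_div, intervalIntegral.integral_sub i3 i4]
        rw [hsplit, intervalIntegral.integral_comp_add_right (fun u => f u * g u) h]
        have hmem_ah : a + h ∈ s := ⟨by linarith, by linarith [hh.2]⟩
        have hmem_bh : b + h ∈ s := ⟨by linarith, by linarith [hh.2]⟩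
        have S1 := integral_add_adjacent_intervals (hPint _ hmem_ah _ hmem_b)
          (hPint _ hmem_b _ hmem_bh)
        have S2 := integral_add_adjacent_intervals (hPint _ hmem_a _ hmem_ah)
          (hPint _ hmem_ah _ hmem_b)
        rw [← S1, ← S2]; ring
      linarith [key]
    have := hE.sub hR
    rw [sub_zero] at this
    exact this.congr' heqA
  -- limit of B
  have hB : Tendsto (fun h : ℝ => ∫ t in a..b, (nablaD f h t * g t + f t * nablaD g h t)) l
      (nhds (f b * g b - f a * g a)) := by
    have hE : Tendsto (fun h : ℝ => (∫ t in (b-h)..b, f t * g t)/h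
        - (∫ t in (a-h)..a, f t * g t)/h) l (nhds (f b * g b - f a * g a)) :=
      (aux_left isOpen_Ioo hPo hbo).sub (aux_left isOpen_Ioo hPo hao)
    have hR := hRlim (fun h t => nablaD f h t * nablaD g h t) (fun h hh t ht => (hprod h hh t ht).2)
    have heqB : ∀ᶠ h in l, ((∫ t in (b-h)..b, f t * g t)/h - (∫ t in (a-h)..a, f t * g t)/h)
        + h * (∫ t in a..b, nablaD f h t * nablaD g h t)
        = ∫ t in a..b, (nablaD f h t * g t + f t * nablaD g h t) := by
      filter_upwards [hIoo] with h hh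
      have h0 := hh.1
      obtain ⟨hcDf, hcNf⟩ := hcont f hfc h hh
      obtain ⟨hcDg, hcNg⟩ := hcont g hgc h hh
      have i1 : IntervalIntegrable (fun t => nablaD f h t * g t + f t * nablaD g h t) volume a b :=
        hii _ ((hcNf.mul hcg).add (hcf.mul hcNg))
      have i2 : IntervalIntegrable (fun t => nablaD f h t * nablaD g h t) volume a b :=
        hii _ (hcNf.mul hcNg)
      have i3 : IntervalIntegrable (fun t => f (t-h) * g (t-h)) volume a b :=
        hii _ ((hshift f hfc h hh).2.mul ((hshift g hgc h hh).2))
      have i4 : IntervalIntegrable (fun t => f t * g t) volume a b := hii _ (hcf.mul hcg)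
      have hfun : (fun t => (nablaD f h t * g t + f t * nablaD g h t)
          - h * (nablaD f h t * nablaD g h t)) = fun t => (f t * g t - f (t-h) * g (t-h))/h := by
        funext t; simp only [nablaD]; field_simp; ring
      have key : (∫ t in a..b, (nablaD f h t * g t + f t * nablaD g h t))
          - h * (∫ t in a..b, nablaD f h t * nablaD g h t)
          = (∫ t in (b-h)..b, f t * g t)/h - (∫ t in (a-h)..a, f t * g t)/h := by
        rw [← intervalIntegral.integral_const_mul, ← intervalIntegral.integral_sub i1
          (i2.const_mul h), hfun]
        have hsplit : (∫ t in a..b, (f t * g t - f (t-h) * g (t-h))/h)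
            = ((∫ t in a..b, f t * g t) - ∫ t in a..b, f (t-h) * g (t-h))/h := by
          rw [intervalIntegral.integral_div, intervalIntegral.integral_sub i4 i3]
        rw [hsplit, intervalIntegral.integral_comp_sub_right (fun u => f u * g u) h]
        have hmem_ah : a - h ∈ s := ⟨by linarith [hh.2], by linarith⟩
        have hmem_bh : b - h ∈ s := ⟨by linarith [hh.2], by linarith⟩
        have S1 := integral_add_adjacent_intervals (hPint _ hmem_ah _ hmem_a)
          (hPint _ hmem_a _ hmem_bh)
        have S2 := integral_add_adjacent_intervals (hPint _ hmem_a _ hmem_bh)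
          (hPint _ hmem_bh _ hmem_b)
        rw [← S1, ← S2]; ring
      linarith [key]
    have := hE.add hR
    rw [add_zero] at this
    exact this.congr' heqB
  -- the key pointwise/integral identity
  have hkey : ∀ᶠ h in l,
      ((1 + Complex.I)/2) * ((∫ t in a..b, (deltaD f h t * g t + f t * deltaD g h t) : ℝ) : ℂ)
        + ((1 - Complex.I)/2) * ((∫ t in a..b, (nablaD f h t * g t + f t * nablaD g h t) : ℝ) : ℂ)
      = (∫ t in a..b, scaleD f h t * (g t : ℂ)) + (∫ t in a..b, (f t : ℂ) * scaleD g h t) := by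
    filter_upwards [hIoo] with h hh
    obtain ⟨hcDf, hcNf⟩ := hcont f hfc h hh
    obtain ⟨hcDg, hcNg⟩ := hcont g hgc h hh
    have j1 : IntervalIntegrable (fun t => scaleD f h t * (g t : ℂ)) volume a b :=
      hii _ ((hscont f hfc h hh).mul (Complex.continuous_ofReal.comp_continuousOn hcg))
    have j2 : IntervalIntegrable (fun t => (f t : ℂ) * scaleD g h t) volume a b :=
      hii _ ((Complex.continuous_ofReal.comp_continuousOn hcf).mul (hscont g hgc h hh))
    have j3 : IntervalIntegrable
        (fun t => ((deltaD f h t * g t + f t * deltaD g h t : ℝ) : ℂ)) volume a b :=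
      hii _ (Complex.continuous_ofReal.comp_continuousOn ((hcDf.mul hcg).add (hcf.mul hcDg)))
    have j4 : IntervalIntegrable
        (fun t => ((nablaD f h t * g t + f t * nablaD g h t : ℝ) : ℂ)) volume a b :=
      hii _ (Complex.continuous_ofReal.comp_continuousOn ((hcNf.mul hcg).add (hcf.mul hcNg)))
    have hptw : (fun t => scaleD f h t * (g t : ℂ) + (f t : ℂ) * scaleD g h t)
        = fun t => ((1 + Complex.I)/2) * ((deltaD f h t * g t + f t * deltaD g h t : ℝ) : ℂ)
          + ((1 - Complex.I)/2) * ((nablaD f h t * g t + f t * nablaD g h t : ℝ) : ℂ) := by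
      funext t; simp only [scaleD]; push_cast; ring
    rw [← intervalIntegral.integral_add j1 j2, hptw,
      intervalIntegral.integral_add (j3.const_mul _) (j4.const_mul _),
      intervalIntegral.integral_const_mul, intervalIntegral.integral_const_mul,
      intervalIntegral.integral_ofReal, intervalIntegral.integral_ofReal]
  -- combine
  have hAc : Tendsto (fun h : ℝ =>
      ((∫ t in a..b, (deltaD f h t * g t + f t * deltaD g h t) : ℝ) : ℂ)) l
      (nhds ((f b * g b - f a * g a : ℝ) : ℂ)) :=
    (Complex.continuous_ofReal.tendsto _).comp hA
  have hBc : Tendsto (fun h : ℝ =>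
      ((∫ t in a..b, (nablaD f h t * g t + f t * nablaD g h t) : ℝ) : ℂ)) l
      (nhds ((f b * g b - f a * g a : ℝ) : ℂ)) :=
    (Complex.continuous_ofReal.tendsto _).comp hB
  have hlim2 : Tendsto (fun h : ℝ => (∫ t in a..b, scaleD f h t * (g t : ℂ))
      + (∫ t in a..b, (f t : ℂ) * scaleD g h t)) l
      (nhds ((f b * g b - f a * g a : ℝ) : ℂ)) := by
    have hcomb := (hAc.const_mul ((1 + Complex.I)/2)).add (hBc.const_mul ((1 - Complex.I)/2))
    rw [show ((1 + Complex.I)/2) * ((f b * g b - f a * g a : ℝ) : ℂ)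
      + ((1 - Complex.I)/2) * ((f b * g b - f a * g a : ℝ) : ℂ)
      = ((f b * g b - f a * g a : ℝ) : ℂ) by ring] at hcomb
    exact hcomb.congr' hkey
  have huniq := tendsto_nhds_unique (hΦ.add hΨ) hlim2
  have : (∫ t in a..b, F t * (g t : ℂ))
      = ((f b * g b - f a * g a : ℝ) : ℂ) - ∫ t in a..b, (f t : ℂ) * G t := by
    rw [← huniq]; ring
  rw [this]; push_cast; ring
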